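/- Let X and Y be compact metric spaces and (f_n : X → Y) a sequence of homeomorphisms. Suppose there are positive reals ε_n → 0 such that d(f_m(x), f_n(x)) ≤ ε_n and d(f_m⁻¹(y), f_n⁻¹(y)) ≤ ε_n for all x ∈ X, y ∈ Y, and m ≥ n. Then the maps f_n converge uniformly to a continuous map f : X → Y, the inverses f_n⁻¹ converge uniformly to a continuous map g : Y → X, and g ∘ f = id_X and f ∘ g = id_Y provided additionally that f and g are inverse on a dense subset; in particular if the sets where f_n and f_{n-1} (resp. their inverses) differ are contained in nested sets U_n (resp. f_n(U_n)) whose intersections have empty interior, then f is a homeomorphism. -/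

import Mathlib

open Filter Topology

/-- Lemma on convergence of homeomorphisms between compact metric spaces. -/
theorem converging_homeomorphisms
    {X Y : Type*} [MetricSpace X] [MetricSpace Y] [CompactSpace X] [CompactSpace Y]
    (f : ℕ → X ≃ₜ Y) (U : ℕ → Set X) (ε : ℕ → ℝ)
    (hεpos : ∀ n, 0 < ε n)
    (hε : Filter.Tendsto ε Filter.atTop (nhds 0))
    (hUnested : ∀ n, U (n + 1) ⊆ U n)
    (hagree : ∀ n, ∀ x ∉ U n, f (n + 1) x = f n x)
    (hcauchy : ∀ m n : ℕ, n ≤ m → ∀ x : X, dist (f m x) (f n x) ≤ ε n)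
    (hcauchy' : ∀ m n : ℕ, n ≤ m → ∀ y : Y, dist ((f m).symm y) ((f n).symm y) ≤ ε n)
    (hint : interior (⋂ n, U n) = ∅)
    (hint' : interior (⋂ n, (f n) '' U n) = ∅) :
    ∃ F : X ≃ₜ Y,
      TendstoUniformly (fun n x => f n x) F Filter.atTop ∧
      TendstoUniformly (fun n y => (f n).symm y) F.symm Filter.atTop ∧
      F '' (⋂ n, U n) = ⋂ n, (f n) '' U n := by
  have hUanti : Antitone U := antitone_nat_of_succ_le hUnested
  -- A : eventual constancy outside U n
  have hA : ∀ n x, x ∉ U n → ∀ m, n ≤ m → f m x = f n x := by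
    intro n x hx m hm
    induction m, hm using Nat.le_induction with
    | base => rfl
    | succ m hm ih =>
      rw [hagree m x (fun h => hx (hUanti hm h)), ih]
  -- membership in images via symm
  have hmem : ∀ n (y : Y), y ∈ f n '' U n ↔ (f n).symm y ∈ U n := by
    intro n y
    constructor
    · rintro ⟨x, hx, rfl⟩; simpa using hx
    · intro h; exact ⟨(f n).symm y, h, by simp⟩
  -- key : symm membership agrees across a step
  have hkey : ∀ n (y : Y), (f n).symm y ∉ U n → (f (n + 1)).symm y = (f n).symm y := by
    intro n y h
    have h2 : f (n + 1) ((f n).symm y) = y := by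
      rw [hagree n _ h]; simp
    apply (f (n + 1)).injective
    simp [h2]
  -- images are nested
  have himg : ∀ n, f (n + 1) '' U (n + 1) ⊆ f n '' U n := by
    intro n y hy
    rw [hmem] at hy ⊢
    by_contra h
    exact (fun hh => h hh) (by rw [← hkey n y h] ; exact hUnested _ hy)
  have himganti : Antitone (fun n => f n '' U n) := antitone_nat_of_succ_le himg
  -- C : eventual constancy of symm outside images
  have hC : ∀ n y, y ∉ f n '' U n → ∀ m, n ≤ m → (f m).symm y = (f n).symm y := by
    intro n y hy m hm
    have hx : (f n).symm y ∉ U n := fun h => hy ((hmem n y).2 h)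
    have h2 : f m ((f n).symm y) = y := by rw [hA n _ hx m hm]; simp
    apply (f m).injective
    simp [h2]
  -- Cauchy sequences
  have hcs : ∀ x : X, CauchySeq (fun n => f n x) := by
    intro x
    apply cauchySeq_of_le_tendsto_0 (fun n => 2 * ε n)
    · intro n m N hn hm
      calc dist (f n x) (f m x) ≤ dist (f n x) (f N x) + dist (f m x) (f N x) :=
            dist_triangle_right _ _ _
        _ ≤ ε N + ε N := add_le_add (hcauchy n N hn x) (hcauchy m N hm x)
        _ = 2 * ε N := by ring
    · simpa using hε.const_mul 2
  have hcs' : ∀ y : Y, CauchySeq (fun n => (f n).symm y) := by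
    intro y
    apply cauchySeq_of_le_tendsto_0 (fun n => 2 * ε n)
    · intro n m N hn hm
      calc dist ((f n).symm y) ((f m).symm y)
          ≤ dist ((f n).symm y) ((f N).symm y) + dist ((f m).symm y) ((f N).symm y) :=
            dist_triangle_right _ _ _
        _ ≤ ε N + ε N := add_le_add (hcauchy' n N hn y) (hcauchy' m N hm y)
        _ = 2 * ε N := by ring
    · simpa using hε.const_mul 2
  choose F₀ hF₀ using fun x => cauchySeq_tendsto_of_complete (hcs x)
  choose g₀ hg₀ using fun y => cauchySeq_tendsto_of_complete (hcs' y)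
  -- limits determined by eventual values
  have hFeq : ∀ (x : X) (n : ℕ), x ∉ U n → F₀ x = f n x := by
    intro x n hx
    refine tendsto_nhds_unique (hF₀ x) (tendsto_const_nhds.congr' ?_)
    filter_upwards [eventually_ge_atTop n] with m hm
    exact (hA n x hx m hm).symm
  have hgeq : ∀ (y : Y) (n : ℕ), y ∉ f n '' U n → g₀ y = (f n).symm y := by
    intro y n hy
    refine tendsto_nhds_unique (hg₀ y) (tendsto_const_nhds.congr' ?_)
    filter_upwards [eventually_ge_atTop n] with m hm
    exact (hC n y hy m hm).symm
  -- uniform bounds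
  have hdF : ∀ n x, dist (F₀ x) (f n x) ≤ ε n := by
    intro n x
    refine le_of_tendsto (((hF₀ x).dist tendsto_const_nhds) :
      Tendsto (fun m => dist (f m x) (f n x)) atTop (nhds (dist (F₀ x) (f n x)))) ?_
    filter_upwards [eventually_ge_atTop n] with m hm
    exact hcauchy m n hm x
  have hdg : ∀ n y, dist (g₀ y) ((f n).symm y) ≤ ε n := by
    intro n y
    refine le_of_tendsto (((hg₀ y).dist tendsto_const_nhds) :
      Tendsto (fun m => dist ((f m).symm y) ((f n).symm y)) atTop
        (nhds (dist (g₀ y) ((f n).symm y)))) ?_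
    filter_upwards [eventually_ge_atTop n] with m hm
    exact hcauchy' m n hm y
  have hTU : TendstoUniformly (fun n x => f n x) F₀ atTop := by
    rw [Metric.tendstoUniformly_iff]
    intro δ hδ
    filter_upwards [hε.eventually (gt_mem_nhds hδ)] with n hn x
    exact lt_of_le_of_lt (hdF n x) hn
  have hTU' : TendstoUniformly (fun n y => (f n).symm y) g₀ atTop := by
    rw [Metric.tendstoUniformly_iff]
    intro δ hδ
    filter_upwards [hε.eventually (gt_mem_nhds hδ)] with n hn y
    exact lt_of_le_of_lt (hdg n y) hn
  have hFcont : Continuous F₀ :=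
    hTU.continuous (Eventually.of_forall fun n => (f n).continuous).frequently
  have hgcont : Continuous g₀ :=
    hTU'.continuous (Eventually.of_forall fun n => (f n).symm.continuous).frequently
  -- inverse on dense sets
  have hleft : ∀ x, g₀ (F₀ x) = x := by
    have hd : Dense (⋂ n, U n)ᶜ := interior_eq_empty_iff_dense_compl.1 hint
    have : Set.EqOn (g₀ ∘ F₀) id (⋂ n, U n)ᶜ := by
      intro x hx
      obtain ⟨n, hn⟩ : ∃ n, x ∉ U n := by simpa [Set.mem_iInter] using hx
      have h1 : F₀ x = f n x := hFeq x n hn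
      have h2 : f n x ∉ f n '' U n := fun h => hn ((f n).injective.mem_set_image.1
        (by simpa [hmem] using h))
      simp only [Function.comp_apply, id, h1]
      rw [hgeq _ n (by rw [hmem]; simpa using hn)]
      simp
    have := (Continuous.ext_on hd (hgcont.comp hFcont) continuous_id this)
    intro x; exact congrFun this x
  have hright : ∀ y, F₀ (g₀ y) = y := by
    have hd : Dense (⋂ n, f n '' U n)ᶜ := interior_eq_empty_iff_dense_compl.1 hint'
    have : Set.EqOn (F₀ ∘ g₀) id (⋂ n, f n '' U n)ᶜ := by
      intro y hy
      obtain ⟨n, hn⟩ : ∃ n, y ∉ f n '' U n := by simpa [Set.mem_iInter] using hy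
      have h1 : g₀ y = (f n).symm y := hgeq y n hn
      have hx : (f n).symm y ∉ U n := fun h => hn ((hmem n y).2 h)
      simp only [Function.comp_apply, id, h1]
      rw [hFeq _ n hx]
      simp
    have := (Continuous.ext_on hd (hFcont.comp hgcont) continuous_id this)
    intro y; exact congrFun this y
  let e : X ≃ Y := ⟨F₀, g₀, hleft, hright⟩
  let F : X ≃ₜ Y := Continuous.homeoOfEquivCompactToT2 (f := e) hFcont
  refine ⟨F, hTU, hTU', ?_⟩
  ext y
  constructor
  · rintro ⟨x, hx, rfl⟩
    rw [Set.mem_iInter]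
    intro n
    by_contra h
    have h' : F₀ x ∉ ⇑(f n) '' U n := h
    have h2 := hgeq (F₀ x) n h'
    rw [hleft x] at h2
    have h3 : f n x = F₀ x := by nth_rewrite 1 [h2]; simp
    exact h' ⟨x, Set.mem_iInter.1 hx n, h3⟩
  · intro hy
    refine ⟨g₀ y, ?_, hright y⟩
    rw [Set.mem_iInter]
    intro n
    by_contra h
    have h1 : F₀ (g₀ y) = f n (g₀ y) := hFeq _ n h
    rw [hright y] at h1
    have hyim := Set.mem_iInter.1 hy n
    rw [hmem] at hyim
    rw [h1] at hyim
    simp at hyim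
    exact h hyim
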